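/- Let τ > 0 and let x : [-τ, T] → ℝ be continuous with T ≥ τ. Define v : [0,T] → ℝ × L²(-τ,0;ℝ) by v(t) = (x(t), x_t), where x_t(θ) = x(t+θ), and let C(v(t)) := x(t-τ). Then ∫₀ᵀ |x(t-τ)| dt ≤ (1+√τ)·( |v(0)|_H + ∫₀ᵀ |v(t)|_H dt ), where |(a,φ)|_H² = |a|² + ∫_{-τ}^0 |φ(θ)|² dθ. -/

import Mathlib

open MeasureTheory Real

/-- Measurement estimate (MES) for the delayed evaluation `C(v(t)) = x(t-τ)` in
`H = ℝ × L²(-τ,0;ℝ)`. -/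
theorem measurement_estimate_scalar_delay
    (τ T : ℝ) (hτ : 0 < τ) (hT : τ ≤ T) (x : ℝ → ℝ)
    (hx : ContinuousOn x (Set.Icc (-τ) T))
    (Hnorm : ℝ → ℝ)
    (hH : ∀ t, Hnorm t = Real.sqrt ((x t) ^ 2 + ∫ θ in (-τ)..(0:ℝ), (x (t + θ)) ^ 2)) :
    (∫ t in (0:ℝ)..T, |x (t - τ)|) ≤
      (1 + Real.sqrt τ) * (Hnorm 0 + ∫ t in (0:ℝ)..T, Hnorm t) := by
  have hτ0 : (0:ℝ) ≤ τ := hτ.le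
  have hT0 : (0:ℝ) ≤ T := le_trans hτ0 hT
  have hmτT : -τ ≤ T := by linarith
  have hmτ0 : -τ ∈ Set.Icc (-τ) T := ⟨le_refl _, hmτT⟩
  have hxabs : ContinuousOn (fun s => |x s|) (Set.Icc (-τ) T) := hx.abs
  have hxsq : ContinuousOn (fun s => (x s) ^ 2) (Set.Icc (-τ) T) := hx.pow 2
  have habs_int : ∀ a b : ℝ, a ∈ Set.Icc (-τ) T → b ∈ Set.Icc (-τ) T →
      IntervalIntegrable (fun s => |x s|) volume a b := fun a b ha hb =>
    (hxabs.mono (Set.uIcc_subset_Icc ha hb)).intervalIntegrable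
  have hsq_int : ∀ a b : ℝ, a ∈ Set.Icc (-τ) T → b ∈ Set.Icc (-τ) T →
      IntervalIntegrable (fun s => (x s) ^ 2) volume a b := fun a b ha hb =>
    (hxsq.mono (Set.uIcc_subset_Icc ha hb)).intervalIntegrable
  set F : ℝ → ℝ := fun t => ∫ u in (-τ)..t, (x u) ^ 2 with hF
  have hFcont : ContinuousOn F (Set.Icc (-τ) T) := by
    have he : Set.uIcc (-τ) T = Set.Icc (-τ) T := Set.uIcc_of_le hmτT
    have h := intervalIntegral.continuousOn_primitive_interval
      (f := fun u => (x u) ^ 2) (a := (-τ)) (b := T) (μ := volume)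
      (by rw [he]; exact hxsq.integrableOn_Icc)
    rwa [he] at h
  have hmem : ∀ t ∈ Set.Icc (0:ℝ) T, t ∈ Set.Icc (-τ) T := by
    intro t ht; exact ⟨by linarith [ht.1], ht.2⟩
  have hmem' : ∀ t ∈ Set.Icc (0:ℝ) T, t - τ ∈ Set.Icc (-τ) T := by
    intro t ht; exact ⟨by linarith [ht.1], by linarith [ht.2]⟩
  have hHrw : ∀ t ∈ Set.Icc (0:ℝ) T,
      Hnorm t = Real.sqrt ((x t) ^ 2 + (F t - F (t - τ))) := by
    intro t ht
    rw [hH t]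
    congr 1
    have h1 : (∫ θ in (-τ)..(0:ℝ), (x (t + θ)) ^ 2)
        = ∫ u in (t - τ)..t, (x u) ^ 2 := by
      have h2 := intervalIntegral.integral_comp_add_right
        (a := (-τ)) (b := (0:ℝ)) (f := fun u => (x u) ^ 2) t
      have h3 : (∫ θ in (-τ)..(0:ℝ), (x (t + θ)) ^ 2)
          = ∫ θ in (-τ)..(0:ℝ), (x (θ + t)) ^ 2 := by
        simp only [add_comm]
      rw [h3, h2, zero_add, neg_add_eq_sub]
    rw [h1]
    rw [intervalIntegral.integral_interval_sub_left
      (hsq_int (-τ) t hmτ0 (hmem t ht)) (hsq_int (-τ) (t - τ) hmτ0 (hmem' t ht))]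
  have hsub : Set.Icc (0:ℝ) T ⊆ Set.Icc (-τ) T := fun t ht => hmem t ht
  have hHcont : ContinuousOn Hnorm (Set.Icc (0:ℝ) T) := by
    have hc : ContinuousOn (fun t => Real.sqrt ((x t) ^ 2 + (F t - F (t - τ))))
        (Set.Icc (0:ℝ) T) := by
      apply Real.continuous_sqrt.comp_continuousOn
      apply ContinuousOn.add (hxsq.mono hsub)
      apply ContinuousOn.sub (hFcont.mono hsub)
      exact hFcont.comp (continuous_id.sub continuous_const).continuousOn
        (fun t ht => hmem' t ht)
    exact ContinuousOn.congr hc hHrw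
  have hHInt : IntervalIntegrable Hnorm volume 0 T := by
    apply ContinuousOn.intervalIntegrable
    rwa [Set.uIcc_of_le hT0]
  have hHnn : ∀ t, 0 ≤ Hnorm t := fun t => (hH t) ▸ Real.sqrt_nonneg _
  have hpt : ∀ t, |x t| ≤ Hnorm t := by
    intro t
    rw [hH t]
    have hInn : 0 ≤ ∫ θ in (-τ)..(0:ℝ), (x (t + θ)) ^ 2 :=
      intervalIntegral.integral_nonneg (by linarith) (fun u _ => sq_nonneg _)
    calc |x t| = Real.sqrt ((x t) ^ 2) := (Real.sqrt_sq_eq_abs _).symm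
      _ ≤ _ := Real.sqrt_le_sqrt (by linarith)
  -- split the LHS integral
  have hsplit : (∫ t in (0:ℝ)..T, |x (t - τ)|)
      = (∫ t in (0:ℝ)..τ, |x (t - τ)|) + ∫ t in τ..T, |x (t - τ)| := by
    rw [intervalIntegral.integral_add_adjacent_intervals] <;>
    · apply ContinuousOn.intervalIntegrable
      apply hxabs.comp (continuous_id.sub continuous_const).continuousOn
      intro t ht
      rw [Set.uIcc_of_le (by linarith)] at ht
      constructor <;> simp only [Pi.sub_apply, id_eq] <;> [linarith [ht.1]; linarith [ht.2]]
  have hS1 : (∫ t in (0:ℝ)..τ, |x (t - τ)|) = ∫ s in (-τ)..(0:ℝ), |x s| := by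
    have h := intervalIntegral.integral_comp_sub_right
      (a := (0:ℝ)) (b := τ) (f := fun s => |x s|) τ
    simpa using h
  have hS2 : (∫ t in τ..T, |x (t - τ)|) = ∫ s in (0:ℝ)..(T - τ), |x s| := by
    have h := intervalIntegral.integral_comp_sub_right
      (a := τ) (b := T) (f := fun s => |x s|) τ
    simpa using h
  -- Cauchy–Schwarz bound on [-τ,0]
  have hCS : (∫ s in (-τ)..(0:ℝ), |x s|) ≤ Real.sqrt τ * Hnorm 0 := by
    set μ := volume.restrict (Set.Ioc (-τ) (0:ℝ)) with hμ
    haveI : IsFiniteMeasure μ := by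
      constructor
      rw [hμ, Measure.restrict_apply_univ, Real.volume_Ioc]
      exact ENNReal.ofReal_lt_top
    have hIcc : Set.Ioc (-τ) (0:ℝ) ⊆ Set.Icc (-τ) T := fun s hs =>
      ⟨hs.1.le, hs.2.trans hT0⟩
    have hmeas : AEStronglyMeasurable x μ :=
      (hx.mono hIcc).aestronglyMeasurable measurableSet_Ioc
    obtain ⟨M, hM⟩ := (isCompact_Icc (a := -τ) (b := T)).exists_bound_of_continuousOn hx
    have hf2 : MemLp (fun s => |x s|) (ENNReal.ofReal 2) μ := by
      apply MemLp.of_bound hmeas.norm M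
      filter_upwards [ae_restrict_mem measurableSet_Ioc] with s hs
      simpa [Real.norm_eq_abs, abs_abs] using hM s (hIcc hs)
    have hg2 : MemLp (fun _ : ℝ => (1:ℝ)) (ENNReal.ofReal 2) μ := memLp_const 1
    have hpq : (2:ℝ).HolderConjugate 2 := Real.HolderConjugate.two_two
    have key := integral_mul_le_Lp_mul_Lq_of_nonneg hpq
      (f := fun s => |x s|) (g := fun _ => (1:ℝ)) (μ := μ)
      (Filter.Eventually.of_forall fun s => abs_nonneg _)
      (Filter.Eventually.of_forall fun s => zero_le_one) hf2 hg2
    have habs2 : (fun s => |x s| ^ (2:ℝ)) = fun s => (x s) ^ 2 := by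
      funext s
      rw [show (2:ℝ) = ((2:ℕ):ℝ) by norm_num, Real.rpow_natCast, sq_abs]
    have hone2 : (fun _ : ℝ => (1:ℝ) ^ (2:ℝ)) = fun _ : ℝ => (1:ℝ) := by
      funext s; rw [Real.one_rpow]
    simp only [mul_one, habs2, hone2] at key
    have hμone : (∫ _ : ℝ, (1:ℝ) ∂μ) = τ := by
      rw [hμ]
      simp [Real.volume_Ioc]
      linarith
    rw [hμone] at key
    have hInn0 : (0:ℝ) ≤ ∫ s, (x s) ^ 2 ∂μ := integral_nonneg fun s => sq_nonneg _
    have h2 : (∫ s, (x s) ^ 2 ∂μ) ^ ((1:ℝ)/2) = Real.sqrt (∫ s, (x s) ^ 2 ∂μ) :=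
      (Real.sqrt_eq_rpow _).symm
    have hτhalf : τ ^ ((1:ℝ)/2) = Real.sqrt τ := (Real.sqrt_eq_rpow τ).symm
    rw [h2, hτhalf] at key
    have hH0 : Real.sqrt (∫ s, (x s) ^ 2 ∂μ) ≤ Hnorm 0 := by
      rw [hH 0]
      have he : (∫ θ in (-τ)..(0:ℝ), (x (0 + θ)) ^ 2) = ∫ s, (x s) ^ 2 ∂μ := by
        simp only [zero_add]
        rw [intervalIntegral.integral_of_le (by linarith : -τ ≤ (0:ℝ))]
      rw [he]
      exact Real.sqrt_le_sqrt (by nlinarith [sq_nonneg (x 0)])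
    have hIoc : (∫ s in (-τ)..(0:ℝ), |x s|) = ∫ s, |x s| ∂μ := by
      rw [intervalIntegral.integral_of_le (by linarith : -τ ≤ (0:ℝ))]
    rw [hIoc]
    calc (∫ s, |x s| ∂μ) ≤ Real.sqrt (∫ s, (x s) ^ 2 ∂μ) * Real.sqrt τ := key
      _ ≤ Real.sqrt τ * Hnorm 0 := by
          rw [mul_comm]
          exact mul_le_mul_of_nonneg_left hH0 (Real.sqrt_nonneg τ)
  -- bound on [0, T-τ]
  have hB2 : (∫ s in (0:ℝ)..(T - τ), |x s|) ≤ ∫ t in (0:ℝ)..T, Hnorm t := by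
    have h0mem : (0:ℝ) ∈ Set.Icc (-τ) T := ⟨by linarith, hT0⟩
    have hTτmem : T - τ ∈ Set.Icc (-τ) T := ⟨by linarith, by linarith⟩
    have hTmem : T ∈ Set.Icc (-τ) T := ⟨hmτT, le_refl _⟩
    have hadd := intervalIntegral.integral_add_adjacent_intervals
      (habs_int 0 (T - τ) h0mem hTτmem) (habs_int (T - τ) T hTτmem hTmem)
    have hnn : (0:ℝ) ≤ ∫ s in (T - τ)..T, |x s| :=
      intervalIntegral.integral_nonneg (by linarith) (fun u _ => abs_nonneg _)
    have h2 : (∫ s in (0:ℝ)..T, |x s|) ≤ ∫ t in (0:ℝ)..T, Hnorm t :=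
      intervalIntegral.integral_mono_on hT0 (habs_int 0 T h0mem hTmem) hHInt
        (fun t _ => hpt t)
    linarith
  have hInt_nn : (0:ℝ) ≤ ∫ t in (0:ℝ)..T, Hnorm t :=
    intervalIntegral.integral_nonneg hT0 (fun t _ => hHnn t)
  have hs : (0:ℝ) ≤ Real.sqrt τ := Real.sqrt_nonneg τ
  have h0 : (0:ℝ) ≤ Hnorm 0 := hHnn 0
  rw [hsplit, hS1, hS2]
  nlinarith [hCS, hB2, mul_nonneg hs hInt_nn, mul_nonneg hs h0]
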